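/- A quasi-hyperbolic continuous linear cocycle Ψ over a compact base 𝐁 is (uniformly) hyperbolic if and only if 𝐄(b) = E^s(b) + E^u(b) for every b ∈ 𝐁. -/

import Mathlib

open Filter Topology

/-- A continuous linear cocycle (`ℝ`-action by bundle isomorphisms on the
trivial vector bundle `B × E`) over a continuous flow on `B`. -/
structure LinearCocycle (B E : Type*) [TopologicalSpace B]
    [NormedAddCommGroup E] [NormedSpace ℝ E] where
  flow : ℝ → B → B
  flow_cont : Continuous fun p : ℝ × B => flow p.1 p.2
  flow_zero : ∀ b, flow 0 b = b
  flow_add : ∀ s t b, flow s (flow t b) = flow (s + t) b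
  P : ℝ → B → E →L[ℝ] E
  P_cont : Continuous fun p : ℝ × B => P p.1 p.2
  P_zero : ∀ b, P 0 b = ContinuousLinearMap.id ℝ E
  P_comp : ∀ s t b, (P s (flow t b)).comp (P t b) = P (s + t) b

variable {B E : Type*} [TopologicalSpace B]
  [NormedAddCommGroup E] [NormedSpace ℝ E]

/-- Quasi-hyperbolicity: every nonzero vector has unbounded orbit. -/
def LinearCocycle.IsQuasiHyperbolic (Φ : LinearCocycle B E) : Prop :=
  ∀ b : B, ∀ v : E, v ≠ 0 → ∀ C : ℝ, ∃ t : ℝ, C < ‖Φ.P t b v‖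

/-- The subspace of vectors with bounded forward orbit. -/
def LinearCocycle.stable (Φ : LinearCocycle B E) (b : B) : Submodule ℝ E where
  carrier := {v | ∃ C : ℝ, ∀ t > (0:ℝ), ‖Φ.P t b v‖ ≤ C}
  add_mem' := by
    rintro u v ⟨C₁, h₁⟩ ⟨C₂, h₂⟩
    exact ⟨C₁ + C₂, fun t ht => by
      simpa [map_add] using (norm_add_le (Φ.P t b u) (Φ.P t b v)).trans
        (add_le_add (h₁ t ht) (h₂ t ht))⟩
  zero_mem' := ⟨0, fun t ht => by simp⟩
  smul_mem' := by
    rintro c v ⟨C, h⟩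
    exact ⟨‖c‖ * C, fun t ht => by
      rw [map_smul, norm_smul]
      exact mul_le_mul_of_nonneg_left (h t ht) (norm_nonneg c)⟩

/-- The subspace of vectors with bounded backward orbit. -/
def LinearCocycle.unstable (Φ : LinearCocycle B E) (b : B) : Submodule ℝ E where
  carrier := {v | ∃ C : ℝ, ∀ t > (0:ℝ), ‖Φ.P (-t) b v‖ ≤ C}
  add_mem' := by
    rintro u v ⟨C₁, h₁⟩ ⟨C₂, h₂⟩
    exact ⟨C₁ + C₂, fun t ht => by
      simpa [map_add] using (norm_add_le (Φ.P (-t) b u) (Φ.P (-t) b v)).trans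
        (add_le_add (h₁ t ht) (h₂ t ht))⟩
  zero_mem' := ⟨0, fun t ht => by simp⟩
  smul_mem' := by
    rintro c v ⟨C, h⟩
    exact ⟨‖c‖ * C, fun t ht => by
      rw [map_smul, norm_smul]
      exact mul_le_mul_of_nonneg_left (h t ht) (norm_nonneg c)⟩

/-- Uniform hyperbolicity of a linear cocycle over an invariant subset `Λ`. -/
def LinearCocycle.IsHyperbolicOn (Φ : LinearCocycle B E) (Λ : Set B) : Prop :=
  ∃ Es Eu : B → Submodule ℝ E,
    (∀ t : ℝ, ∀ b ∈ Λ, (Es b).map (Φ.P t b : E →ₗ[ℝ] E) = Es (Φ.flow t b)) ∧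
    (∀ t : ℝ, ∀ b ∈ Λ, (Eu b).map (Φ.P t b : E →ₗ[ℝ] E) = Eu (Φ.flow t b)) ∧
    (∀ b ∈ Λ, IsCompl (Es b) (Eu b)) ∧
    ∃ T > (0:ℝ), ∀ b ∈ Λ,
      (∀ v ∈ Es b, v ≠ 0 → ‖Φ.P T b v‖ < (1/2) * ‖v‖) ∧
      (∀ v ∈ Eu b, v ≠ 0 → ‖Φ.P (-T) b v‖ < (1/2) * ‖v‖)


lemma mapClusterPt_le {X : Type*} [TopologicalSpace X] {q : ℕ → X} {a : X}
    (ha : MapClusterPt a Filter.atTop q) {g : X → ℝ} (hg : Continuous g) {c : ℝ}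
    (h : ∀ᶠ n in Filter.atTop, g (q n) ≤ c) : g a ≤ c := by
  by_contra hc
  push_neg at hc
  have hU : {x : X | c < g x} ∈ nhds a := (isOpen_lt continuous_const hg).mem_nhds hc
  obtain ⟨n, hn1, hn2⟩ := ((mapClusterPt_iff_frequently.mp ha _ hU).and_eventually h).exists
  exact absurd hn2 (not_le.mpr hn1)

lemma mapClusterPt_ge {X : Type*} [TopologicalSpace X] {q : ℕ → X} {a : X}
    (ha : MapClusterPt a Filter.atTop q) {g : X → ℝ} (hg : Continuous g) {c : ℝ}
    (h : ∀ᶠ n in Filter.atTop, c ≤ g (q n)) : c ≤ g a := by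
  by_contra hc
  push_neg at hc
  have hU : {x : X | g x < c} ∈ nhds a := (isOpen_lt hg continuous_const).mem_nhds hc
  obtain ⟨n, hn1, hn2⟩ := ((mapClusterPt_iff_frequently.mp ha _ hU).and_eventually h).exists
  exact absurd hn2 (not_le.mpr hn1)

namespace LinearCocycle

variable (Φ : LinearCocycle B E)

lemma P_apply (s t : ℝ) (b : B) (v : E) :
    Φ.P s (Φ.flow t b) (Φ.P t b v) = Φ.P (s + t) b v := by
  have := ContinuousLinearMap.ext_iff.mp (Φ.P_comp s t b) v
  simpa using this

lemma flow_neg (t : ℝ) (b : B) : Φ.flow (-t) (Φ.flow t b) = b := by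
  rw [Φ.flow_add, neg_add_cancel, Φ.flow_zero]

lemma P_inv (t : ℝ) (b : B) (v : E) :
    Φ.P (-t) (Φ.flow t b) (Φ.P t b v) = v := by
  rw [Φ.P_apply, neg_add_cancel, Φ.P_zero]; rfl

lemma P_inv' (t : ℝ) (b : B) (v : E) :
    Φ.P t b (Φ.P (-t) (Φ.flow t b) v) = v := by
  have := Φ.P_apply t (-t) (Φ.flow t b) v
  rw [Φ.flow_neg] at this
  rw [this, add_neg_cancel, Φ.P_zero]; rfl

lemma cont_fixed_time (s : ℝ) : Continuous fun q : B × E => Φ.P s q.1 q.2 := by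
  have h1 : Continuous fun b : B => Φ.P s b :=
    Φ.P_cont.comp (continuous_const.prodMk continuous_id)
  exact (h1.comp continuous_fst).clm_apply continuous_snd

lemma exists_bound_Icc (b : B) (v : E) (a c : ℝ) :
    ∃ C, ∀ t ∈ Set.Icc a c, ‖Φ.P t b v‖ ≤ C := by
  have h : Continuous fun t : ℝ => Φ.P t b v := by
    have h1 : Continuous fun t : ℝ => Φ.P t b :=
      Φ.P_cont.comp (continuous_id.prodMk continuous_const)
    exact h1.clm_apply continuous_const
  exact isCompact_Icc.exists_bound_of_continuousOn h.continuousOn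

lemma stable_bound {b : B} {v : E} (hv : v ∈ Φ.stable b) (a : ℝ) :
    ∃ C, ∀ t, a ≤ t → ‖Φ.P t b v‖ ≤ C := by
  obtain ⟨C, hC⟩ := hv
  obtain ⟨C', hC'⟩ := Φ.exists_bound_Icc b v (min a 0) 0
  refine ⟨max C C', fun t ht => ?_⟩
  rcases lt_or_ge 0 t with h | h
  · exact (hC t h).trans (le_max_left _ _)
  · exact (hC' t ⟨le_trans (min_le_left _ _) ht, h⟩).trans (le_max_right _ _)

lemma mem_stable_of {b : B} {v : E} {a C : ℝ}
    (h : ∀ t, a ≤ t → ‖Φ.P t b v‖ ≤ C) : v ∈ Φ.stable b := by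
  obtain ⟨C', hC'⟩ := Φ.exists_bound_Icc b v 0 (max a 0)
  refine ⟨max C C', fun t ht => ?_⟩
  rcases le_or_gt a t with h' | h'
  · exact (h t h').trans (le_max_left _ _)
  · exact (hC' t ⟨ht.le, le_trans h'.le (le_max_left _ _)⟩).trans (le_max_right _ _)

lemma mem_stable_map {b : B} {v : E} (hv : v ∈ Φ.stable b) (t : ℝ) :
    Φ.P t b v ∈ Φ.stable (Φ.flow t b) := by
  obtain ⟨C, hC⟩ := Φ.stable_bound hv (1 + t)
  refine Φ.mem_stable_of (a := 1) (C := C) fun s hs => ?_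
  rw [Φ.P_apply]
  exact hC (s + t) (by linarith)

lemma stable_map_eq (t : ℝ) (b : B) :
    (Φ.stable b).map (Φ.P t b : E →ₗ[ℝ] E) = Φ.stable (Φ.flow t b) := by
  apply le_antisymm
  · rintro w ⟨v, hv, rfl⟩
    exact Φ.mem_stable_map hv t
  · intro w hw
    refine ⟨Φ.P (-t) (Φ.flow t b) w, ?_, Φ.P_inv' t b w⟩
    have := Φ.mem_stable_map hw (-t)
    rwa [Φ.flow_neg] at this

/-- The time-reversed cocycle. -/
def reverse (Φ : LinearCocycle B E) : LinearCocycle B E where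
  flow t b := Φ.flow (-t) b
  flow_cont := Φ.flow_cont.comp ((continuous_fst.neg).prodMk continuous_snd)
  flow_zero b := by simp [Φ.flow_zero]
  flow_add s t b := by rw [Φ.flow_add, ← neg_add]
  P t b := Φ.P (-t) b
  P_cont := Φ.P_cont.comp ((continuous_fst.neg).prodMk continuous_snd)
  P_zero b := by simp [Φ.P_zero]
  P_comp s t b := by rw [Φ.P_comp, ← neg_add]

@[simp] lemma reverse_P (t : ℝ) (b : B) : Φ.reverse.P t b = Φ.P (-t) b := rfl

@[simp] lemma reverse_flow (t : ℝ) (b : B) : Φ.reverse.flow t b = Φ.flow (-t) b := rfl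

lemma reverse_qh (hqh : Φ.IsQuasiHyperbolic) : Φ.reverse.IsQuasiHyperbolic := by
  intro b v hv C
  obtain ⟨t, ht⟩ := hqh b v hv C
  exact ⟨-t, by simpa using ht⟩

lemma reverse_stable (b : B) : Φ.reverse.stable b = Φ.unstable b :=
  Submodule.ext fun v => Iff.rfl

lemma eq_zero_of_bddOrbit (hqh : Φ.IsQuasiHyperbolic) {b : B} {v : E}
    (h : ∃ C, ∀ t, ‖Φ.P t b v‖ ≤ C) : v = 0 := by
  by_contra hv
  obtain ⟨C, hC⟩ := h
  obtain ⟨t, ht⟩ := hqh b v hv C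
  exact absurd (hC t) (not_le.mpr ht)

lemma exists_opBound [CompactSpace B] (r : ℝ) :
    ∃ L, 0 < L ∧ ∀ s, |s| ≤ r → ∀ b, ‖Φ.P s b‖ ≤ L := by
  obtain ⟨C, hC⟩ := (isCompact_Icc (a := -r) (b := r)).prod isCompact_univ
    |>.exists_bound_of_continuousOn Φ.P_cont.continuousOn
  refine ⟨max C 1, lt_of_lt_of_le one_pos (le_max_right _ _), fun s hs b => ?_⟩
  exact (hC (s, b) ⟨abs_le.mp hs, Set.mem_univ _⟩).trans (le_max_left _ _)

lemma uniform_stable_bound [CompactSpace B] [FiniteDimensional ℝ E]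
    (hqh : Φ.IsQuasiHyperbolic) :
    ∃ K, 1 ≤ K ∧ ∀ b, ∀ v ∈ Φ.stable b, ∀ t, 0 ≤ t → ‖Φ.P t b v‖ ≤ K * ‖v‖ := by
  suffices h : ∃ K : ℝ, ∀ b, ∀ v ∈ Φ.stable b, ‖v‖ = 1 → ∀ t, 0 ≤ t → ‖Φ.P t b v‖ ≤ K by
    obtain ⟨K, hK⟩ := h
    refine ⟨max K 1, le_max_right _ _, fun b v hv t ht => ?_⟩
    rcases eq_or_ne v 0 with rfl | hv0
    · simp
    · have hn : (0:ℝ) < ‖v‖ := norm_pos_iff.mpr hv0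
      have hu : ‖v‖⁻¹ • v ∈ Φ.stable b := (Φ.stable b).smul_mem _ hv
      have h1 : ‖‖v‖⁻¹ • v‖ = 1 := norm_smul_inv_norm hv0
      have h2 := hK b _ hu h1 t ht
      rw [map_smul, norm_smul, norm_inv, norm_norm] at h2
      have h3 : ‖Φ.P t b v‖ ≤ K * ‖v‖ := by
        rw [inv_mul_le_iff₀ hn] at h2; linarith [h2]
      exact h3.trans (mul_le_mul_of_nonneg_right (le_max_left _ _) (norm_nonneg v))
  by_contra hcon
  push_neg at hcon
  have key : ∀ n : ℕ, ∃ (b d : B) (v u : E) (r : ℝ), 0 ≤ r ∧ v ∈ Φ.stable b ∧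
      ‖v‖ = 1 ∧ ‖u‖ = 1 ∧ (n:ℝ)/2 < ‖Φ.P r b v‖ ∧
      (∀ s, -r ≤ s → ‖Φ.P s d u‖ ≤ 2) := by
    intro n
    obtain ⟨b, v, hv, hv1, t, ht, hK⟩ := hcon n
    set S := (fun t => ‖Φ.P t b v‖) '' Set.Ici (0:ℝ) with hS
    have hne : S.Nonempty := ⟨‖Φ.P 0 b v‖, 0, Set.mem_Ici.mpr le_rfl, rfl⟩
    have hbdd : BddAbove S := by
      obtain ⟨C, hC⟩ := Φ.stable_bound hv 0
      exact ⟨C, by rintro x ⟨s, hs, rfl⟩; exact hC s hs⟩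
    set σ := sSup S with hσdef
    have hσ : (n:ℝ) < σ := lt_of_lt_of_le hK (le_csSup hbdd ⟨t, ht, rfl⟩)
    have hσpos : 0 < σ := lt_of_le_of_lt (Nat.cast_nonneg n) hσ
    obtain ⟨x, hxS, hx⟩ := exists_lt_of_lt_csSup hne (by linarith : σ/2 < σ)
    obtain ⟨r, hr0, rfl⟩ := hxS
    rw [Set.mem_Ici] at hr0
    set w := Φ.P r b v with hw
    have hwpos : 0 < ‖w‖ := lt_trans (by positivity) hx
    have hw0 : w ≠ 0 := norm_pos_iff.mp hwpos
    refine ⟨b, Φ.flow r b, v, ‖w‖⁻¹ • w, r, hr0, hv, hv1, norm_smul_inv_norm hw0,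
      lt_trans (by push_cast; linarith) hx, fun s hs => ?_⟩
    rw [map_smul, norm_smul, norm_inv, norm_norm]
    have h4 : ‖Φ.P s (Φ.flow r b) w‖ ≤ σ := by
      rw [hw, Φ.P_apply]
      exact le_csSup hbdd ⟨s + r, Set.mem_Ici.mpr (by linarith), rfl⟩
    have h5 : ‖w‖⁻¹ ≤ (σ/2)⁻¹ := by
      apply inv_anti₀ (by linarith) hx.le
    calc ‖w‖⁻¹ * ‖Φ.P s (Φ.flow r b) w‖ ≤ (σ/2)⁻¹ * σ := by
          apply mul_le_mul h5 h4 (norm_nonneg _) (by positivity)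
      _ = 2 := by field_simp
  choose b d v u r hr0 hvst hv1 hu1 hgrow hbnd using key
  haveI : ProperSpace E := FiniteDimensional.proper ℝ E
  have hcomp : IsCompact ((Set.univ : Set B) ×ˢ Metric.sphere (0:E) 1) :=
    isCompact_univ.prod (isCompact_sphere 0 1)
  have hmemq : ∀ n, (d n, u n) ∈ (Set.univ : Set B) ×ˢ Metric.sphere (0:E) 1 :=
    fun n => ⟨Set.mem_univ _, by simpa [mem_sphere_iff_norm] using hu1 n⟩
  have hle : Filter.map (fun n => (d n, u n)) Filter.atTop ≤
      Filter.principal ((Set.univ : Set B) ×ˢ Metric.sphere (0:E) 1) :=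
    Filter.le_principal_iff.mpr (Filter.mem_map.mpr (Filter.univ_mem' hmemq))
  obtain ⟨⟨dL, uL⟩, hmem, hcp⟩ := hcomp.exists_mapClusterPt hle
  have huL : ‖uL‖ = 1 := by simpa [mem_sphere_iff_norm] using hmem.2
  -- r n → ∞
  have hrbig : ∀ s : ℝ, ∃ N : ℕ, ∀ n ≥ N, -(r n) ≤ s := by
    intro s
    obtain ⟨L, hL0, hLb⟩ := Φ.exists_opBound (max (-s) 0)
    refine ⟨⌈2*L⌉₊ + 1, fun n hn => ?_⟩
    by_contra hcon2
    push_neg at hcon2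
    have hrle : r n ≤ max (-s) 0 := le_trans (by linarith) (le_max_left _ _)
    have habs : |r n| ≤ max (-s) 0 := abs_le.mpr ⟨by linarith [hr0 n, le_max_right (-s) (0:ℝ)], hrle⟩
    have h6 : ‖Φ.P (r n) (b n) (v n)‖ ≤ L := by
      calc ‖Φ.P (r n) (b n) (v n)‖ ≤ ‖Φ.P (r n) (b n)‖ * ‖v n‖ :=
            (Φ.P (r n) (b n)).le_opNorm _
        _ ≤ L := by rw [hv1 n, mul_one]; exact hLb _ habs _
    have h7 : (n:ℝ)/2 ≤ L := le_trans (hgrow n).le h6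
    have h8 : (n:ℝ) ≥ (⌈2*L⌉₊ + 1 : ℕ) := Nat.cast_le.mpr hn
    have h9 : (2*L : ℝ) ≤ ⌈2*L⌉₊ := Nat.le_ceil _
    push_cast at h8
    linarith
  -- the limit vector has bounded full orbit
  have hbd : ∀ s : ℝ, ‖Φ.P s dL uL‖ ≤ 2 := by
    intro s
    obtain ⟨N, hN⟩ := hrbig s
    have hg : Continuous fun p : B × E => ‖Φ.P s p.1 p.2‖ := (Φ.cont_fixed_time s).norm
    exact mapClusterPt_le hcp hg (Filter.eventually_atTop.mpr ⟨N, fun n hn => hbnd n s (hN n hn)⟩)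
  have : uL = 0 := Φ.eq_zero_of_bddOrbit hqh ⟨2, hbd⟩
  rw [this, norm_zero] at huL
  norm_num at huL

lemma exists_small [CompactSpace B] [FiniteDimensional ℝ E] (hqh : Φ.IsQuasiHyperbolic)
    {b : B} {v : E} {C : ℝ} (hC : ∀ t, 0 ≤ t → ‖Φ.P t b v‖ ≤ C)
    {ε : ℝ} (hε : 0 < ε) : ∃ s, 0 ≤ s ∧ ‖Φ.P s b v‖ < ε := by
  by_contra hcon
  push_neg at hcon
  set q : ℕ → B × E := fun n => (Φ.flow n b, Φ.P n b v) with hq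
  have hmemq : ∀ n, q n ∈ (Set.univ : Set B) ×ˢ Metric.closedBall (0:E) C :=
    fun n => ⟨Set.mem_univ _, by
      simpa [Metric.mem_closedBall, dist_zero_right] using hC n (by positivity)⟩
  have hcomp : IsCompact ((Set.univ : Set B) ×ˢ Metric.closedBall (0:E) C) := by
    haveI : ProperSpace E := FiniteDimensional.proper ℝ E
    exact isCompact_univ.prod (isCompact_closedBall 0 C)
  have hle : Filter.map q Filter.atTop ≤
      Filter.principal ((Set.univ : Set B) ×ˢ Metric.closedBall (0:E) C) :=
    Filter.le_principal_iff.mpr (Filter.mem_map.mpr (Filter.univ_mem' hmemq))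
  obtain ⟨⟨dL, wL⟩, _, hcp⟩ := hcomp.exists_mapClusterPt hle
  have hwL : ε ≤ ‖wL‖ := by
    have hg : Continuous fun p : B × E => ‖p.2‖ := continuous_snd.norm
    exact mapClusterPt_ge hcp hg (Filter.Eventually.of_forall fun n => hcon _ (by positivity))
  have hbd : ∀ s : ℝ, ‖Φ.P s dL wL‖ ≤ C := by
    intro s
    have hg : Continuous fun p : B × E => ‖Φ.P s p.1 p.2‖ := (Φ.cont_fixed_time s).norm
    refine mapClusterPt_le hcp hg (Filter.eventually_atTop.mpr ⟨⌈-s⌉₊, fun n hn => ?_⟩)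
    show ‖Φ.P s (Φ.flow n b) (Φ.P n b v)‖ ≤ C
    rw [Φ.P_apply]
    have h1 : (-s : ℝ) ≤ n := le_trans (Nat.le_ceil _) (Nat.cast_le.mpr hn)
    exact hC _ (by linarith)
  have : wL = 0 := Φ.eq_zero_of_bddOrbit hqh ⟨C, hbd⟩
  rw [this, norm_zero] at hwL
  linarith

lemma uniform_contraction [CompactSpace B] [FiniteDimensional ℝ E]
    (hqh : Φ.IsQuasiHyperbolic) :
    ∃ T, 0 < T ∧ ∀ b, ∀ v ∈ Φ.stable b, ∀ t, T ≤ t → ‖Φ.P t b v‖ ≤ (1/4) * ‖v‖ := by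
  obtain ⟨K, hK1, hK⟩ := Φ.uniform_stable_bound hqh
  have hKpos : (0:ℝ) < K := lt_of_lt_of_le one_pos hK1
  by_contra hcon
  push_neg at hcon
  have key : ∀ n : ℕ, ∃ (b : B) (v : E), v ∈ Φ.stable b ∧ ‖v‖ = 1 ∧
      (∀ s, 0 ≤ s → s ≤ (n:ℝ) → 1/(4*K) ≤ ‖Φ.P s b v‖) := by
    intro n
    obtain ⟨b, v, hv, t, ht, hlt⟩ := hcon ((n:ℝ)+1) (by positivity)
    have hv0 : v ≠ 0 := by
      rintro rfl
      simp at hlt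
    have hvn : (0:ℝ) < ‖v‖ := norm_pos_iff.mpr hv0
    set u := ‖v‖⁻¹ • v with hu
    have hust : u ∈ Φ.stable b := (Φ.stable b).smul_mem _ hv
    have hu1 : ‖u‖ = 1 := norm_smul_inv_norm hv0
    have h14 : 1/4 < ‖Φ.P t b u‖ := by
      rw [hu, map_smul, norm_smul, norm_inv, norm_norm]
      rw [lt_inv_mul_iff₀ hvn]
      linarith
    refine ⟨b, u, hust, hu1, fun s hs0 hsn => ?_⟩
    have hst : s ≤ t := by linarith
    have hmem2 : Φ.P s b u ∈ Φ.stable (Φ.flow s b) := Φ.mem_stable_map hust s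
    have h2 : ‖Φ.P t b u‖ ≤ K * ‖Φ.P s b u‖ := by
      have h3 := hK (Φ.flow s b) _ hmem2 (t - s) (by linarith)
      have e : t - s + s = t := by ring
      rw [Φ.P_apply, e] at h3
      exact h3
    rw [div_le_iff₀ (by positivity : (0:ℝ) < 4*K)]
    nlinarith
  choose b v hvst hv1 hlow using key
  haveI : ProperSpace E := FiniteDimensional.proper ℝ E
  have hcomp : IsCompact ((Set.univ : Set B) ×ˢ Metric.sphere (0:E) 1) :=
    isCompact_univ.prod (isCompact_sphere 0 1)
  have hmemq : ∀ n, (b n, v n) ∈ (Set.univ : Set B) ×ˢ Metric.sphere (0:E) 1 :=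
    fun n => ⟨Set.mem_univ _, by simpa [mem_sphere_iff_norm] using hv1 n⟩
  have hle : Filter.map (fun n => (b n, v n)) Filter.atTop ≤
      Filter.principal ((Set.univ : Set B) ×ˢ Metric.sphere (0:E) 1) :=
    Filter.le_principal_iff.mpr (Filter.mem_map.mpr (Filter.univ_mem' hmemq))
  obtain ⟨⟨bL, vL⟩, hmem, hcp⟩ := hcomp.exists_mapClusterPt hle
  have hvL1 : ‖vL‖ = 1 := by simpa [mem_sphere_iff_norm] using hmem.2
  have hstab : ∀ t, 0 ≤ t → ‖Φ.P t bL vL‖ ≤ K := by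
    intro t ht
    have hg : Continuous fun p : B × E => ‖Φ.P t p.1 p.2‖ := (Φ.cont_fixed_time t).norm
    refine mapClusterPt_le hcp hg (Filter.Eventually.of_forall fun n => ?_)
    have := hK (b n) (v n) (hvst n) t ht
    rw [hv1 n, mul_one] at this
    exact this
  have hlowL : ∀ s, 0 ≤ s → 1/(4*K) ≤ ‖Φ.P s bL vL‖ := by
    intro s hs
    have hg : Continuous fun p : B × E => ‖Φ.P s p.1 p.2‖ := (Φ.cont_fixed_time s).norm
    refine mapClusterPt_ge hcp hg (Filter.eventually_atTop.mpr ⟨⌈s⌉₊, fun n hn => ?_⟩)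
    exact hlow n s hs (le_trans (Nat.le_ceil _) (Nat.cast_le.mpr hn))
  obtain ⟨s, hs0, hsmall⟩ := Φ.exists_small hqh hstab
    (ε := 1/(4*K)) (by positivity)
  exact absurd (hlowL s hs0) (not_le.mpr hsmall)

lemma le_stable_of [CompactSpace B] (F : B → Submodule ℝ E)
    (hinv : ∀ t b, (F b).map (Φ.P t b : E →ₗ[ℝ] E) = F (Φ.flow t b))
    {T : ℝ} (hT : 0 < T)
    (hc : ∀ c, ∀ w ∈ F c, ‖Φ.P T c w‖ ≤ 2⁻¹ * ‖w‖) (b : B) : F b ≤ Φ.stable b := by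
  intro v hv
  have hiter : ∀ k : ℕ, Φ.P ((k:ℝ)*T) b v ∈ F (Φ.flow ((k:ℝ)*T) b) ∧
      ‖Φ.P ((k:ℝ)*T) b v‖ ≤ ‖v‖ := by
    intro k
    induction k with
    | zero => simpa [Φ.P_zero, Φ.flow_zero] using hv
    | succ k ih =>
      have e : ((k+1 : ℕ) : ℝ) * T = T + (k:ℝ)*T := by push_cast; ring
      have hmem : Φ.P T (Φ.flow ((k:ℝ)*T) b) (Φ.P ((k:ℝ)*T) b v) ∈
          F (Φ.flow T (Φ.flow ((k:ℝ)*T) b)) := by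
        rw [← hinv T (Φ.flow ((k:ℝ)*T) b)]
        exact ⟨_, ih.1, rfl⟩
      have h1 : Φ.P (T + (k:ℝ)*T) b v = Φ.P T (Φ.flow ((k:ℝ)*T) b) (Φ.P ((k:ℝ)*T) b v) :=
        (Φ.P_apply T ((k:ℝ)*T) b v).symm
      have h2 : Φ.flow (T + (k:ℝ)*T) b = Φ.flow T (Φ.flow ((k:ℝ)*T) b) :=
        (Φ.flow_add T ((k:ℝ)*T) b).symm
      refine ⟨by rw [e, h1, h2]; exact hmem, ?_⟩
      rw [e, h1]
      have h3 := hc _ _ ih.1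
      have h4 := norm_nonneg (Φ.P ((k:ℝ)*T) b v)
      have h5 := ih.2
      linarith
  obtain ⟨L, hL0, hLb⟩ := Φ.exists_opBound T
  refine Φ.mem_stable_of (a := 0) (C := L * ‖v‖) fun t ht => ?_
  set k := ⌈t/T⌉₊ with hk
  have hdiv0 : 0 ≤ t/T := by positivity
  have hk1 : t ≤ (k:ℝ)*T := by
    rw [← div_le_iff₀ hT]
    exact Nat.le_ceil _
  have hk2 : (k:ℝ)*T < t + T := by
    have := Nat.ceil_lt_add_one hdiv0
    calc (k:ℝ)*T < (t/T + 1)*T := by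
          apply mul_lt_mul_of_pos_right this hT
      _ = t + T := by field_simp
  have e : t - (k:ℝ)*T + (k:ℝ)*T = t := by ring
  have h1 : Φ.P t b v = Φ.P (t - (k:ℝ)*T) (Φ.flow ((k:ℝ)*T) b) (Φ.P ((k:ℝ)*T) b v) := by
    rw [Φ.P_apply, e]
  rw [h1]
  calc ‖Φ.P (t - (k:ℝ)*T) (Φ.flow ((k:ℝ)*T) b) (Φ.P ((k:ℝ)*T) b v)‖
      ≤ ‖Φ.P (t - (k:ℝ)*T) (Φ.flow ((k:ℝ)*T) b)‖ * ‖Φ.P ((k:ℝ)*T) b v‖ :=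
        ContinuousLinearMap.le_opNorm _ _
    _ ≤ L * ‖v‖ := by
        apply mul_le_mul _ (hiter k).2 (norm_nonneg _) hL0.le
        exact hLb _ (abs_le.mpr ⟨by linarith, by linarith⟩) _

end LinearCocycle


open LinearCocycle

/-- A quasi-hyperbolic continuous linear cocycle over a compact base is
hyperbolic if and only if `𝐄(b) = E^s(b) + E^u(b)` for every `b`. -/
theorem quasi_hyperbolic_iff_splitting
    [CompactSpace B] [FiniteDimensional ℝ E]
    (Φ : LinearCocycle B E) (hqh : Φ.IsQuasiHyperbolic) :
    Φ.IsHyperbolicOn Set.univ ↔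
      ∀ b : B, Φ.stable b ⊔ Φ.unstable b = ⊤ := by
  constructor
  · rintro ⟨Es, Eu, hs, hu, hcompl, T, hT, hcontr⟩ b
    have hsc : ∀ c, ∀ w ∈ Es c, ‖Φ.P T c w‖ ≤ 2⁻¹ * ‖w‖ := by
      intro c w hw
      rcases eq_or_ne w 0 with rfl | hw0
      · simp
      · have := (hcontr c (Set.mem_univ c)).1 w hw hw0
        linarith
    have hEs : Es b ≤ Φ.stable b :=
      Φ.le_stable_of Es (fun t c => hs t c (Set.mem_univ c)) hT hsc b
    have huc : ∀ c, ∀ w ∈ Eu c, ‖Φ.reverse.P T c w‖ ≤ 2⁻¹ * ‖w‖ := by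
      intro c w hw
      rcases eq_or_ne w 0 with rfl | hw0
      · simp
      · have := (hcontr c (Set.mem_univ c)).2 w hw hw0
        rw [Φ.reverse_P]
        linarith
    have hEu : Eu b ≤ Φ.unstable b := by
      rw [← Φ.reverse_stable]
      refine Φ.reverse.le_stable_of Eu (fun t c => ?_) hT huc b
      have := hu (-t) c (Set.mem_univ c)
      simpa using this
    have htop := codisjoint_iff.mp (hcompl b (Set.mem_univ b)).codisjoint
    rw [eq_top_iff, ← htop]
    exact sup_le_sup hEs hEu
  · intro hsplit
    refine ⟨Φ.stable, Φ.unstable, fun t b _ => Φ.stable_map_eq t b,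
      fun t b _ => ?_, fun b _ => ⟨?_, codisjoint_iff.mpr (hsplit b)⟩, ?_⟩
    · have := Φ.reverse.stable_map_eq (-t) b
      simp only [reverse_P, reverse_flow, neg_neg, Φ.reverse_stable] at this
      exact this
    · rw [Submodule.disjoint_def]
      intro x hxs hxu
      apply Φ.eq_zero_of_bddOrbit hqh
      obtain ⟨C₁, h₁⟩ := hxs
      obtain ⟨C₂, h₂⟩ := hxu
      refine ⟨max (max C₁ C₂) ‖x‖, fun t => ?_⟩
      rcases lt_trichotomy t 0 with h | h | h
      · have h3 := h₂ (-t) (by linarith)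
        rw [neg_neg] at h3
        exact h3.trans ((le_max_right C₁ C₂).trans (le_max_left _ _))
      · rw [h, Φ.P_zero]
        exact le_max_right _ _
      · exact (h₁ t h).trans ((le_max_left C₁ C₂).trans (le_max_left _ _))
    · obtain ⟨Ts, hTs, hcs⟩ := Φ.uniform_contraction hqh
      obtain ⟨Tu, hTu, hcu⟩ := Φ.reverse.uniform_contraction (Φ.reverse_qh hqh)
      refine ⟨max Ts Tu, lt_of_lt_of_le hTs (le_max_left _ _), fun b _ => ⟨?_, ?_⟩⟩
      · intro w hw hw0
        have h1 := hcs b w hw (max Ts Tu) (le_max_left _ _)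
        have h2 : (0:ℝ) < ‖w‖ := norm_pos_iff.mpr hw0
        linarith
      · intro w hw hw0
        have h1 := hcu b w (by rw [Φ.reverse_stable]; exact hw) (max Ts Tu) (le_max_right _ _)
        rw [Φ.reverse_P] at h1
        have h2 : (0:ℝ) < ‖w‖ := norm_pos_iff.mpr hw0
        linarith
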